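/- Let H be a real Hilbert space, z₁,…,z_{n_z}, g₁,…,g_{n_g} ∈ H with Gram matrices Z and G respectively, and A = [a_{kl}] ∈ ℝ^{n_z×n_g}. Then the finite-rank operator K̂ = Σ_{k=1}^{n_z} Σ_{l=1}^{n_g} a_{kl} z_k ⊗ g_l ∈ L(H) satisfies ‖K̂‖ = ‖Z^{1/2} A G^{1/2}‖, where the left-hand side is the operator norm on L(H) and the right-hand side is the spectral norm of the matrix Z^{1/2} A G^{1/2}. -/

import Mathlib

open scoped InnerProductSpace

/-- The rank-one operator `v ⊗ u : w ↦ ⟪u, w⟫ v` on a real Hilbert space. -/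
noncomputable def rankOne {H : Type*} [NormedAddCommGroup H] [InnerProductSpace ℝ H]
    (v u : H) : H →L[ℝ] H := (innerSL ℝ u).smulRight v

/-- The Gram matrix of a finite family of vectors. -/
noncomputable def gram {H : Type*} [NormedAddCommGroup H] [InnerProductSpace ℝ H]
    {n : ℕ} (u : Fin n → H) : Matrix (Fin n) (Fin n) ℝ :=
  Matrix.of fun i j => ⟪u i, u j⟫_ℝ

/-- Spectral norm of a real matrix (the operator norm of the induced map between
Euclidean spaces). -/
noncomputable def specNorm {n m : ℕ} (M : Matrix (Fin n) (Fin m) ℝ) : ℝ :=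
  ‖LinearMap.toContinuousLinearMap (Matrix.toEuclideanLin M)‖


noncomputable def matCLM {n m : ℕ} (M : Matrix (Fin n) (Fin m) ℝ) :
    EuclideanSpace ℝ (Fin m) →L[ℝ] EuclideanSpace ℝ (Fin n) :=
  LinearMap.toContinuousLinearMap (Matrix.toEuclideanLin M)

lemma matCLM_apply {n m : ℕ} (M : Matrix (Fin n) (Fin m) ℝ) (v : EuclideanSpace ℝ (Fin m))
    (i : Fin n) : matCLM M v i = ∑ j, M i j * v j := rfl

noncomputable def synth {H : Type*} [NormedAddCommGroup H] [InnerProductSpace ℝ H]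
    {n : ℕ} (u : Fin n → H) : EuclideanSpace ℝ (Fin n) →L[ℝ] H :=
  LinearMap.toContinuousLinearMap
    { toFun := fun v => ∑ i, v i • u i
      map_add' := by intros a b; simp [add_smul, Finset.sum_add_distrib]
      map_smul' := by intros c a; simp [Finset.smul_sum, smul_smul] }

lemma synth_apply {H : Type*} [NormedAddCommGroup H] [InnerProductSpace ℝ H]
    {n : ℕ} (u : Fin n → H) (v : EuclideanSpace ℝ (Fin n)) :
    synth u v = ∑ i, v i • u i := rfl

noncomputable def anal {H : Type*} [NormedAddCommGroup H] [InnerProductSpace ℝ H]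
    {n : ℕ} (u : Fin n → H) : H →L[ℝ] EuclideanSpace ℝ (Fin n) :=
  ((EuclideanSpace.equiv (Fin n) ℝ).symm : (Fin n → ℝ) →L[ℝ] EuclideanSpace ℝ (Fin n)).comp
    (ContinuousLinearMap.pi fun i => innerSL ℝ (u i))

lemma anal_apply {H : Type*} [NormedAddCommGroup H] [InnerProductSpace ℝ H]
    {n : ℕ} (u : Fin n → H) (x : H) (i : Fin n) : anal u x i = ⟪u i, x⟫_ℝ := rfl

lemma norm_le_of_adj {E F : Type*} [NormedAddCommGroup E] [InnerProductSpace ℝ E]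
    [NormedAddCommGroup F] [InnerProductSpace ℝ F]
    (S : E →L[ℝ] F) (T : F →L[ℝ] E)
    (h : ∀ x y, ⟪S x, y⟫_ℝ = ⟪x, T y⟫_ℝ) : ‖S‖ ≤ ‖T‖ := by
  refine S.opNorm_le_bound (norm_nonneg T) (fun x => ?_)
  rcases eq_or_lt_of_le (norm_nonneg (S x)) with hx | hx
  · rw [← hx]; positivity
  · have h1 : ‖S x‖ ^ 2 = ⟪x, T (S x)⟫_ℝ := by
      rw [← h, real_inner_self_eq_norm_sq]
    have h2 : ⟪x, T (S x)⟫_ℝ ≤ ‖x‖ * (‖T‖ * ‖S x‖) := by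
      calc ⟪x, T (S x)⟫_ℝ ≤ ‖x‖ * ‖T (S x)‖ := real_inner_le_norm _ _
        _ ≤ ‖x‖ * (‖T‖ * ‖S x‖) := by
            gcongr _ * ?_; exact T.le_opNorm _
    nlinarith

lemma norm_eq_of_adj {E F : Type*} [NormedAddCommGroup E] [InnerProductSpace ℝ E]
    [NormedAddCommGroup F] [InnerProductSpace ℝ F]
    (S : E →L[ℝ] F) (T : F →L[ℝ] E)
    (h : ∀ x y, ⟪S x, y⟫_ℝ = ⟪x, T y⟫_ℝ) : ‖S‖ = ‖T‖ := by
  refine le_antisymm (norm_le_of_adj S T h) (norm_le_of_adj T S fun y x => ?_)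
  rw [real_inner_comm, ← h, real_inner_comm]

lemma norm_eq_of_norm_apply_eq {E F F' : Type*} [NormedAddCommGroup E] [NormedAddCommGroup F]
    [NormedAddCommGroup F'] [NormedSpace ℝ E] [NormedSpace ℝ F] [NormedSpace ℝ F']
    (S : E →L[ℝ] F) (T : E →L[ℝ] F') (h : ∀ x, ‖S x‖ = ‖T x‖) : ‖S‖ = ‖T‖ := by
  refine le_antisymm (S.opNorm_le_bound (norm_nonneg T) fun x => ?_)
    (T.opNorm_le_bound (norm_nonneg S) fun x => ?_)
  · rw [h]; exact T.le_opNorm x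
  · rw [← h]; exact S.le_opNorm x

lemma matCLM_mul {n m p : ℕ} (M : Matrix (Fin n) (Fin m) ℝ) (N : Matrix (Fin m) (Fin p) ℝ)
    (v : EuclideanSpace ℝ (Fin p)) : matCLM (M * N) v = matCLM M (matCLM N v) := by
  ext i
  simp only [matCLM_apply, Matrix.mul_apply, Finset.sum_mul, Finset.mul_sum]
  rw [Finset.sum_comm]
  exact Finset.sum_congr rfl fun j _ => Finset.sum_congr rfl fun k _ => by ring

lemma inner_matCLM {n m : ℕ} (M : Matrix (Fin n) (Fin m) ℝ)
    (v : EuclideanSpace ℝ (Fin m)) (w : EuclideanSpace ℝ (Fin n)) :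
    ⟪matCLM M v, w⟫_ℝ = ⟪v, matCLM M.transpose w⟫_ℝ := by
  simp only [PiLp.inner_apply, RCLike.inner_apply, conj_trivial, matCLM_apply,
    Matrix.transpose_apply, Finset.sum_mul, Finset.mul_sum]
  rw [Finset.sum_comm]
  exact Finset.sum_congr rfl fun j _ => Finset.sum_congr rfl fun k _ => by ring

lemma inner_anal {H : Type*} [NormedAddCommGroup H] [InnerProductSpace ℝ H]
    {n : ℕ} (u : Fin n → H) (x : H) (v : EuclideanSpace ℝ (Fin n)) :
    ⟪anal u x, v⟫_ℝ = ⟪x, synth u v⟫_ℝ := by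
  simp only [PiLp.inner_apply, RCLike.inner_apply, conj_trivial, anal_apply, synth_apply,
    inner_sum, real_inner_smul_right]
  exact Finset.sum_congr rfl fun j _ => by rw [real_inner_comm]

lemma norm_synth {H : Type*} [NormedAddCommGroup H] [InnerProductSpace ℝ H]
    {n : ℕ} (u : Fin n → H) (Mh : Matrix (Fin n) (Fin n) ℝ) (hsymm : Mh.transpose = Mh)
    (h2 : Mh * Mh = gram u) (v : EuclideanSpace ℝ (Fin n)) :
    ‖synth u v‖ = ‖matCLM Mh v‖ := by
  rw [norm_eq_sqrt_real_inner, norm_eq_sqrt_real_inner]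
  congr 1
  rw [inner_matCLM, ← matCLM_mul, hsymm, h2]
  simp only [synth_apply, inner_sum, sum_inner, real_inner_smul_left, real_inner_smul_right,
    PiLp.inner_apply, RCLike.inner_apply, conj_trivial, matCLM_apply, Finset.mul_sum, Finset.sum_mul]
  refine Finset.sum_congr rfl fun j _ => Finset.sum_congr rfl fun k _ => ?_
  simp only [gram, Matrix.of_apply]
  rw [real_inner_comm]
  ring

/-- The operator norm of the finite-rank operator `K̂ = Σ_{k,l} a_{kl} z_k ⊗ g_l`
equals the spectral norm of the matrix `Z^{1/2} A G^{1/2}`, where `Zh = Z^{1/2}`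
and `Gh = G^{1/2}` are the PSD square roots of the Gram matrices of `(z_k)` and
`(g_l)`. -/
theorem statement1 {H : Type*} [NormedAddCommGroup H] [InnerProductSpace ℝ H]
    {nz ng : ℕ} (z : Fin nz → H) (g : Fin ng → H)
    (A : Matrix (Fin nz) (Fin ng) ℝ)
    (Zh : Matrix (Fin nz) (Fin nz) ℝ) (hZh : Zh.PosSemidef) (hZh2 : Zh * Zh = gram z)
    (Gh : Matrix (Fin ng) (Fin ng) ℝ) (hGh : Gh.PosSemidef) (hGh2 : Gh * Gh = gram g) :
    ‖∑ k, ∑ l, A k l • rankOne (z k) (g l)‖ = specNorm (Zh * A * Gh) := by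
  have hZsymm : Zh.transpose = Zh := by
    have := hZh.1; simpa [Matrix.IsHermitian] using this
  have hGsymm : Gh.transpose = Gh := by
    have := hGh.1; simpa [Matrix.IsHermitian] using this
  have hKx : ∀ x, (∑ k, ∑ l, A k l • rankOne (z k) (g l)) x
      = synth z (matCLM A (anal g x)) := by
    intro x
    simp only [ContinuousLinearMap.sum_apply, ContinuousLinearMap.smul_apply, rankOne,
      ContinuousLinearMap.smulRight_apply, innerSL_apply_apply, synth_apply, matCLM_apply,
      anal_apply, Finset.sum_smul, smul_smul]
  have step1 : ‖∑ k, ∑ l, A k l • rankOne (z k) (g l)‖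
      = ‖(matCLM (Zh * A)).comp (anal g)‖ := by
    refine norm_eq_of_norm_apply_eq _ _ fun x => ?_
    rw [hKx, ContinuousLinearMap.comp_apply, matCLM_mul]
    exact norm_synth z Zh hZsymm hZh2 _
  have step2 : ‖(matCLM (Zh * A)).comp (anal g)‖
      = ‖(synth g).comp (matCLM (Zh * A).transpose)‖ := by
    refine norm_eq_of_adj _ _ fun x v => ?_
    rw [ContinuousLinearMap.comp_apply, ContinuousLinearMap.comp_apply, inner_matCLM,
      inner_anal]
  have step3 : ‖(synth g).comp (matCLM (Zh * A).transpose)‖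
      = ‖matCLM (Gh * (Zh * A).transpose)‖ := by
    refine norm_eq_of_norm_apply_eq _ _ fun v => ?_
    rw [ContinuousLinearMap.comp_apply, matCLM_mul]
    exact norm_synth g Gh hGsymm hGh2 _
  have hmat : (Zh * A * Gh).transpose = Gh * (Zh * A).transpose := by
    rw [Matrix.transpose_mul, hGsymm]
  have step4 : ‖matCLM (Zh * A * Gh).transpose‖ = ‖matCLM (Zh * A * Gh)‖ :=
    norm_eq_of_adj _ _ fun v w => by rw [inner_matCLM, Matrix.transpose_transpose]
  rw [step1, step2, step3, ← hmat, step4]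
  rfl
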